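/- If m is a Weber node of a configuration and j ≥ 1 robots simultaneously move from node a to an adjacent node b with d(b,m) = d(a,m) - 1 (where λ(a) ≥ j), then the minimum consistency over all meeting nodes in the new configuration equals the old minimum consistency minus j, and m is a Weber node of the new configuration. -/
import Mathlib


def mdist (a b : ℤ × ℤ) : ℕ := (a.1 - b.1).natAbs + (a.2 - b.2).natAbs

noncomputable def consistency (lam : (ℤ × ℤ) →₀ ℕ) (m : ℤ × ℤ) : ℕ :=
  lam.sum fun v k => mdist v m * k

def IsWeber (lam : (ℤ × ℤ) →₀ ℕ) (M : Finset (ℤ × ℤ)) (m : ℤ × ℤ) : Prop :=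
  m ∈ M ∧ ∀ m' ∈ M, consistency lam m ≤ consistency lam m'

lemma consistency_add (f g : (ℤ × ℤ) →₀ ℕ) (m : ℤ × ℤ) :
    consistency (f + g) m = consistency f m + consistency g m := by
  unfold consistency
  exact Finsupp.sum_add_index' (fun a => mul_zero _) (fun a b₁ b₂ => mul_add _ _ _)

lemma consistency_single (x : ℤ × ℤ) (j : ℕ) (m : ℤ × ℤ) :
    consistency (Finsupp.single x j) m = mdist x m * j := by
  unfold consistency
  exact Finsupp.sum_single_index (mul_zero _)

lemma mdist_triangle (a b c : ℤ × ℤ) : mdist a c ≤ mdist a b + mdist b c := by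
  unfold mdist
  have h1 : (a.1 - c.1).natAbs ≤ (a.1 - b.1).natAbs + (b.1 - c.1).natAbs := by
    have := Int.natAbs_add_le (a.1 - b.1) (b.1 - c.1)
    simpa using this
  have h2 : (a.2 - c.2).natAbs ≤ (a.2 - b.2).natAbs + (b.2 - c.2).natAbs := by
    have := Int.natAbs_add_le (a.2 - b.2) (b.2 - c.2)
    simpa using this
  omega

theorem stmt_2 (lam : (ℤ × ℤ) →₀ ℕ) (M : Finset (ℤ × ℤ)) (hM : M.Nonempty)
    (m a b : ℤ × ℤ) (j : ℕ) (hj : 1 ≤ j) (ha : j ≤ lam a)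
    (hm : IsWeber lam M m)
    (hab : mdist a b = 1) (hb : mdist b m + 1 = mdist a m) :
    IsWeber (lam + Finsupp.single b j - Finsupp.single a j) M m ∧
      consistency (lam + Finsupp.single b j - Finsupp.single a j) m + j
        = consistency lam m := by
  set lam' := lam + Finsupp.single b j - Finsupp.single a j with hlam'
  have hle : Finsupp.single a j ≤ lam + Finsupp.single b j := by
    rw [Finsupp.le_def]
    intro x
    rw [Finsupp.add_apply, Finsupp.single_apply]
    split
    · next h => subst h; exact le_add_right ha
    · exact Nat.zero_le _
  have hcancel : lam' + Finsupp.single a j = lam + Finsupp.single b j :=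
    tsub_add_cancel_of_le hle
  have key : ∀ m' : ℤ × ℤ,
      consistency lam' m' + mdist a m' * j = consistency lam m' + mdist b m' * j := by
    intro m'
    have := congrArg (fun f => consistency f m') hcancel
    simpa [consistency_add, consistency_single] using this
  have hmeq : consistency lam' m + j = consistency lam m := by
    have h := key m
    rw [← hb] at h
    have hamj : (mdist b m + 1) * j = mdist b m * j + j := by ring
    omega
  refine ⟨⟨hm.1, ?_⟩, hmeq⟩
  intro m' hm'
  have hw := hm.2 m' hm'
  have h := key m'
  have htri : mdist a m' ≤ mdist b m' + 1 := by
    have := mdist_triangle a b m'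
    omega
  have : mdist a m' * j ≤ mdist b m' * j + j := by
    calc mdist a m' * j ≤ (mdist b m' + 1) * j := Nat.mul_le_mul_right j htri
    _ = mdist b m' * j + j := by ring
  omega
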